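/- Suppose f_k are holomorphic functions on a polydisc Δ_R ⊂ ℂ^{2n} in variables (z,w), uniformly bounded by C_R, and f_k(z, conj(z)) → f(z, conj(z)) pointwise for a holomorphic function f on Δ_R. Then f_k → f uniformly on compact subsets of Δ_R. -/

import Mathlib

open Filter Metric Topology

/-- A sequence in ℂ converges to something. -/
def Conv (x : ℕ → ℂ) : Prop := ∃ L, Tendsto x atTop (𝓝 L)

lemma conv_of_cauchy {x : ℕ → ℂ} (h : CauchySeq x) : Conv x :=
  cauchySeq_tendsto_of_complete h

lemma Conv.cauchySeq {x : ℕ → ℂ} (h : Conv x) : CauchySeq x := by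
  obtain ⟨L, hL⟩ := h; exact hL.cauchySeq

lemma conv_of_approx {x : ℕ → ℂ}
    (h : ∀ ε : ℝ, 0 < ε → ∃ y : ℕ → ℂ, Conv y ∧ ∀ k, dist (x k) (y k) ≤ ε) :
    Conv x := by
  apply conv_of_cauchy
  rw [Metric.cauchySeq_iff]
  intro ε hε
  obtain ⟨y, hy, hxy⟩ := h (ε/4) (by linarith)
  obtain ⟨N, hN⟩ := Metric.cauchySeq_iff.1 hy.cauchySeq (ε/4) (by linarith)
  refine ⟨N, fun a ha b hb => ?_⟩
  calc dist (x a) (x b) ≤ dist (x a) (y a) + dist (y a) (y b) + dist (y b) (x b) :=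
        dist_triangle4 _ _ _ _
    _ < ε := by
        have h1 := hxy a; have h2 := hxy b; have h3 := hN a ha b hb
        rw [dist_comm (y b) (x b)]
        linarith

/-- Schwarz-type estimate. -/
lemma norm_sub_le_schwarz {u : ℂ → ℂ} {c : ℂ} {r B : ℝ}
    (hd : DifferentiableOn ℂ u (ball c r)) (hB : ∀ z ∈ ball c r, ‖u z‖ ≤ B)
    {z : ℂ} (hz : z ∈ ball c r) : ‖u z - u c‖ ≤ ‖z - c‖ * ((2*B+1)/r) := by
  have hr : 0 < r := nonempty_ball.1 ⟨z, hz⟩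
  have hc : c ∈ ball c r := mem_ball_self hr
  have hmaps : Set.MapsTo u (ball c r) (ball (u c) (2*B+1)) := by
    intro w hw
    have h1 := hB w hw; have h2 := hB c hc
    have hB0 : 0 ≤ B := le_trans (norm_nonneg _) h2
    rw [mem_ball, dist_eq_norm]
    calc ‖u w - u c‖ ≤ ‖u w‖ + ‖u c‖ := norm_sub_le _ _
      _ < 2*B+1 := by linarith
  have := Complex.norm_dslope_le_div_of_mapsTo_ball hd (hmaps.mono_right ball_subset_closedBall) hz
  calc ‖u z - u c‖ = ‖(z - c) • dslope u c z‖ := by rw [sub_smul_dslope]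
    _ = ‖z - c‖ * ‖dslope u c z‖ := by rw [norm_smul]
    _ ≤ ‖z - c‖ * ((2*B+1)/r) := by
        exact mul_le_mul_of_nonneg_left this (norm_nonneg _)

open scoped Classical in
noncomputable def limOf (x : ℕ → ℂ) : ℂ := if h : Conv x then h.choose else 0

lemma tendsto_limOf {x : ℕ → ℂ} (h : Conv x) : Tendsto x atTop (𝓝 (limOf x)) := by
  classical
  rw [limOf]
  rw [dif_pos h]
  exact h.choose_spec

lemma conv_sum {s : Finset ℕ} {f : ℕ → ℕ → ℂ} (h : ∀ m ∈ s, Conv (f m)) :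
    Conv (fun k => ∑ m ∈ s, f m k) :=
  ⟨∑ m ∈ s, limOf (f m), tendsto_finset_sum _ fun m hm => tendsto_limOf (h m hm)⟩


lemma conv_on_ball_of_conv_on_small {r δ C : ℝ} (hδ : 0 < δ) (hδr : δ ≤ r)
    (u : ℕ → ℂ → ℂ)
    (hd : ∀ k, DifferentiableOn ℂ (u k) (ball 0 r))
    (hb : ∀ k, ∀ w ∈ ball (0:ℂ) r, ‖u k w‖ ≤ C)
    (hc : ∀ t ∈ ball (0:ℂ) δ, Conv (fun k => u k t)) :
    ∀ z ∈ ball (0:ℂ) r, Conv (fun k => u k z) := by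
  have hr : 0 < r := lt_of_lt_of_le hδ hδr
  have hC0 : 0 ≤ C := le_trans (norm_nonneg _) (hb 0 0 (mem_ball_self hr))
  intro z hz
  rw [mem_ball, dist_zero_right] at hz
  set ρ : ℝ := (‖z‖ + r) / 2 with hρdef
  have hρ1 : ‖z‖ < ρ := by rw [hρdef]; linarith
  have hρ2 : ρ < r := by rw [hρdef]; linarith
  have hρ0 : 0 < ρ := lt_of_le_of_lt (norm_nonneg z) hρ1
  -- power series at big radius
  set ρ' : NNReal := ⟨ρ, hρ0.le⟩ with hρ'def
  have hρ'0 : (0:NNReal) < ρ' := hρ0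
  have hdP : ∀ k, DifferentiableOn ℂ (u k) (closedBall 0 ρ) := fun k =>
    (hd k).mono (closedBall_subset_ball hρ2)
  have hP : ∀ k, HasFPowerSeriesOnBall (u k) (cauchyPowerSeries (u k) 0 ρ) 0 ρ' := by
    intro k
    exact DifferentiableOn.hasFPowerSeriesOnBall (R := ρ') (hdP k) hρ'0
  -- power series at small radius
  set σ : ℝ := δ / 2 with hσdef
  have hσ0 : 0 < σ := by positivity
  set σ' : NNReal := ⟨σ, hσ0.le⟩ with hσ'def
  have hQ : ∀ k, HasFPowerSeriesOnBall (u k) (cauchyPowerSeries (u k) 0 σ) 0 σ' := by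
    intro k
    apply DifferentiableOn.hasFPowerSeriesOnBall (R := σ') _ hσ0
    exact (hd k).mono (fun w hw => by
      rw [mem_closedBall, dist_zero_right] at hw
      rw [mem_ball, dist_zero_right]
      calc ‖w‖ ≤ σ := hw
        _ < r := by rw [hσdef]; linarith)
  have hPQ : ∀ k, cauchyPowerSeries (u k) 0 ρ = cauchyPowerSeries (u k) 0 σ := fun k =>
    (hP k).hasFPowerSeriesAt.eq_formalMultilinearSeries (hQ k).hasFPowerSeriesAt
  -- the coefficients applied to z
  set A : ℕ → ℕ → ℂ := fun k m => (cauchyPowerSeries (u k) 0 ρ m) (fun _ => z) with hAdef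
  have hzE : z ∈ Metric.eball (0:ℂ) ρ' := by
    rw [Metric.mem_eball, edist_zero_right, enorm_eq_nnnorm, ← ENNReal.coe_lt_coe.symm]
    · exact_mod_cast (by exact_mod_cast hρ1 : ‖z‖₊ < ρ')
  have hsum : ∀ k, HasSum (fun m => A k m) (u k z) := by
    intro k
    have := (hP k).hasSum (y := z) hzE
    simpa only [zero_add] using this
  set q : ℝ := ‖z‖ / ρ with hqdef
  have hq0 : 0 ≤ q := by positivity
  have hq1 : q < 1 := (div_lt_one hρ0).2 hρ1
  -- uniform coefficient bound
  have hAbound : ∀ k m, ‖A k m‖ ≤ C * q ^ m := by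
    intro k m
    have h1 : ‖cauchyPowerSeries (u k) 0 ρ m‖ ≤
        ((2 * Real.pi)⁻¹ * ∫ θ : ℝ in (0)..2 * Real.pi, ‖u k (circleMap 0 ρ θ)‖) * |ρ|⁻¹ ^ m :=
      norm_cauchyPowerSeries_le _ _ _ _
    have hint : (∫ θ : ℝ in (0)..2 * Real.pi, ‖u k (circleMap 0 ρ θ)‖) ≤ C * (2 * Real.pi) := by
      have hcont : Continuous fun θ => ‖u k (circleMap 0 ρ θ)‖ := by
        apply Continuous.norm
        apply ContinuousOn.comp_continuous (hd k).continuousOn (continuous_circleMap 0 ρ)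
        intro θ
        rw [mem_ball, dist_zero_right, norm_circleMap_zero]
        rw [abs_of_pos hρ0]; exact hρ2
      calc (∫ θ : ℝ in (0)..2 * Real.pi, ‖u k (circleMap 0 ρ θ)‖)
          ≤ ∫ _ : ℝ in (0)..2 * Real.pi, C := by
            apply intervalIntegral.integral_mono_on Real.two_pi_pos.le
              (hcont.intervalIntegrable _ _) (intervalIntegrable_const)
            intro θ _
            apply hb
            rw [mem_ball, dist_zero_right, norm_circleMap_zero,
              abs_of_pos hρ0]
            exact hρ2
        _ = C * (2 * Real.pi) := by simp [mul_comm]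
    have h2 : ‖A k m‖ ≤ ‖cauchyPowerSeries (u k) 0 ρ m‖ * ‖z‖ ^ m := by
      have := (cauchyPowerSeries (u k) 0 ρ m).le_opNorm (fun _ => z)
      simpa only [Finset.prod_const, Finset.card_univ, Fintype.card_fin] using this
    have hπ : (0:ℝ) < 2 * Real.pi := Real.two_pi_pos
    calc ‖A k m‖ ≤ ‖cauchyPowerSeries (u k) 0 ρ m‖ * ‖z‖ ^ m := h2
      _ ≤ (((2 * Real.pi)⁻¹ * (C * (2 * Real.pi))) * |ρ|⁻¹ ^ m) * ‖z‖ ^ m := by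
          apply mul_le_mul_of_nonneg_right _ (pow_nonneg (norm_nonneg z) m)
          refine le_trans h1 ?_
          apply mul_le_mul_of_nonneg_right _ (pow_nonneg (by positivity) m)
          apply mul_le_mul_of_nonneg_left hint (by positivity)
      _ = C * q ^ m := by
          have e1 : (2 * Real.pi)⁻¹ * (C * (2 * Real.pi)) = C := by field_simp
          rw [abs_of_pos hρ0, e1, hqdef, div_pow]
          field_simp
          rw [one_div, inv_pow]; field_simp [pow_ne_zero m hρ0.ne']
  -- coefficient convergence via dominated convergence on the small circle
  have hAconv : ∀ m, Conv (fun k => A k m) := by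
    intro m
    have hA' : ∀ k, A k m = (2 * Real.pi * Complex.I : ℂ)⁻¹ •
        ∮ w in C(0, σ), (z / (w - 0)) ^ m • (w - 0)⁻¹ • u k w := by
      intro k
      have : A k m = (cauchyPowerSeries (u k) 0 σ m) (fun _ => z) := by
        simp only [hAdef, hPQ k]
      rw [this]
      exact cauchyPowerSeries_apply (u k) 0 σ m z
    have hcm : ∀ θ : ℝ, circleMap 0 σ θ ∈ ball (0:ℂ) δ := by
      intro θ
      rw [mem_ball, dist_zero_right, norm_circleMap_zero, abs_of_pos hσ0]
      try simp only [hσdef]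
      linarith
    have hcmr : ∀ θ : ℝ, circleMap 0 σ θ ∈ ball (0:ℂ) r := fun θ =>
      ball_subset_ball hδr (hcm θ)
    set Φ : ℕ → ℝ → ℂ := fun k θ => deriv (circleMap 0 σ) θ •
      ((z / (circleMap 0 σ θ - 0)) ^ m • (circleMap 0 σ θ - 0)⁻¹ • u k (circleMap 0 σ θ))
      with hΦdef
    set v : ℂ → ℂ := fun w => limOf (fun k => u k w) with hvdef
    set Φl : ℝ → ℂ := fun θ => deriv (circleMap 0 σ) θ •
      ((z / (circleMap 0 σ θ - 0)) ^ m • (circleMap 0 σ θ - 0)⁻¹ • v (circleMap 0 σ θ))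
      with hΦldef
    have hucont : ∀ k, Continuous fun θ => u k (circleMap 0 σ θ) :=
      fun k => ContinuousOn.comp_continuous (hd k).continuousOn (continuous_circleMap 0 σ)
        (fun θ => hcmr θ)
    have hΦcont : ∀ k, Continuous (Φ k) := by
      intro k
      simp only [hΦdef, deriv_circleMap, sub_zero]
      refine ((continuous_circleMap 0 σ).mul continuous_const).smul ?_
      refine (Continuous.pow (continuous_const.div (continuous_circleMap 0 σ)
        (fun θ => circleMap_ne_center hσ0.ne')) m).smul ?_
      exact (Continuous.inv₀ (continuous_circleMap 0 σ)
        (fun θ => circleMap_ne_center hσ0.ne')).smul (hucont k)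
    have hΦtendsto : Tendsto (fun k => ∫ θ : ℝ in (0)..2*Real.pi, Φ k θ) atTop
        (𝓝 (∫ θ : ℝ in (0)..2*Real.pi, Φl θ)) := by
      apply intervalIntegral.tendsto_integral_filter_of_dominated_convergence
        (bound := fun _ => σ * ((‖z‖/σ) ^ m * (σ⁻¹ * C)))
      · exact Eventually.of_forall fun k => (hΦcont k).aestronglyMeasurable
      · apply Eventually.of_forall
        intro k
        apply MeasureTheory.ae_of_all
        intro θ _
        simp only [hΦdef, norm_smul, deriv_circleMap]
        have e1 : ‖circleMap 0 σ θ * Complex.I‖ = σ := by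
          simp [norm_circleMap_zero, abs_of_pos hσ0]
        have e2 : ‖(z / (circleMap 0 σ θ - 0)) ^ m‖ = (‖z‖/σ) ^ m := by
          simp only [sub_zero, norm_pow, norm_div, norm_circleMap_zero,
            abs_of_pos hσ0]
        have e3 : ‖(circleMap 0 σ θ - 0)⁻¹‖ = σ⁻¹ := by
          simp only [sub_zero, norm_inv, norm_circleMap_zero,
            abs_of_pos hσ0]
        rw [e1, e2, e3]
        have := hb k _ (hcmr θ)
        apply mul_le_mul_of_nonneg_left _ hσ0.le
        apply mul_le_mul_of_nonneg_left _ (by positivity)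
        exact mul_le_mul_of_nonneg_left this (by positivity)
      · exact intervalIntegrable_const
      · apply MeasureTheory.ae_of_all
        intro θ _
        simp only [hΦdef, hΦldef]
        apply Tendsto.const_smul
        apply Tendsto.const_smul
        apply Tendsto.const_smul
        exact tendsto_limOf (hc _ (hcm θ))
    refine ⟨(2 * Real.pi * Complex.I : ℂ)⁻¹ • ∫ θ : ℝ in (0)..2*Real.pi, Φl θ, ?_⟩
    have : (fun k => A k m) = fun k => (2 * Real.pi * Complex.I : ℂ)⁻¹ •
        ∫ θ : ℝ in (0)..2*Real.pi, Φ k θ := by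
      funext k
      rw [hA' k]
      rfl
    rw [this]
    exact hΦtendsto.const_smul _
  -- conclude via geometric tail bound
  apply conv_of_approx
  intro ε hε
  have h1q : (0:ℝ) < 1 - q := by linarith
  have hqlt : ∃ N : ℕ, C * q ^ N * (1 - q)⁻¹ ≤ ε := by
    rcases eq_or_lt_of_le hC0 with hC | hC
    · exact ⟨0, by rw [← hC]; simpa using hε.le⟩
    · have hpos : (0:ℝ) < C * (1 - q)⁻¹ := mul_pos hC (inv_pos.2 h1q)
      obtain ⟨N, hN⟩ := exists_pow_lt_of_lt_one (div_pos hε hpos) hq1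
      refine ⟨N, ?_⟩
      have hN' : q ^ N * (C * (1 - q)⁻¹) < ε := (lt_div_iff₀ hpos).1 hN
      calc C * q ^ N * (1 - q)⁻¹ = q ^ N * (C * (1 - q)⁻¹) := by ring
        _ ≤ ε := hN'.le
  obtain ⟨N, hN⟩ := hqlt
  refine ⟨fun k => ∑ m ∈ Finset.range N, A k m, conv_sum (fun m _ => hAconv m), ?_⟩
  intro k
  have hsummable := (hsum k).summable
  have htsum : u k z = ∑ m ∈ Finset.range N, A k m + ∑' m, A k (m + N) := by
    rw [← (hsum k).tsum_eq]
    exact (hsummable.sum_add_tsum_nat_add N).symm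
  rw [dist_eq_norm]
  have : u k z - ∑ m ∈ Finset.range N, A k m = ∑' m, A k (m + N) := by
    rw [htsum]; ring
  rw [this]
  have hgeo : Summable (fun m : ℕ => C * q ^ (m + N)) := by
    simp_rw [pow_add, ← mul_assoc]
    apply Summable.mul_right
    exact (summable_geometric_of_lt_one hq0 hq1).mul_left C
  have hsn : Summable (fun m : ℕ => ‖A k (m + N)‖) :=
    Summable.of_nonneg_of_le (fun m => norm_nonneg _) (fun m => hAbound k (m + N)) hgeo
  calc ‖∑' m, A k (m + N)‖ ≤ ∑' m, ‖A k (m + N)‖ := norm_tsum_le_tsum_norm hsn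
    _ ≤ ∑' m, C * q ^ (m + N) := Summable.tsum_le_tsum (fun m => hAbound k (m + N)) hsn hgeo
    _ = C * q ^ N * (1 - q)⁻¹ := by
        have e : (fun m : ℕ => C * q ^ (m + N)) = fun m : ℕ => (C * q ^ N) * q ^ m := by
          funext m; rw [pow_add]; ring
        rw [e, tsum_mul_left, tsum_geometric_of_lt_one hq0 hq1]
    _ ≤ ε := hN


lemma Conv.mul_const {x : ℕ → ℂ} (h : Conv x) (a : ℂ) : Conv (fun k => x k * a) := by
  obtain ⟨L, hL⟩ := h; exact ⟨L * a, hL.mul_const a⟩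

lemma Conv.sub {x y : ℕ → ℂ} (hx : Conv x) (hy : Conv y) : Conv (fun k => x k - y k) := by
  obtain ⟨L, hL⟩ := hx; obtain ⟨M, hM⟩ := hy; exact ⟨L - M, hL.sub hM⟩

lemma Conv.const_mul {x : ℕ → ℂ} (h : Conv x) (a : ℂ) : Conv (fun k => a * x k) := by
  obtain ⟨L, hL⟩ := h; exact ⟨a * L, hL.const_mul a⟩

/-- Bound on the dslope at the center of a ball. -/
lemma norm_dslope_bound {u : ℂ → ℂ} {r B : ℝ}
    (hd : DifferentiableOn ℂ u (ball 0 r)) (hB : ∀ z ∈ ball (0:ℂ) r, ‖u z‖ ≤ B)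
    {z : ℂ} (hz : z ∈ ball (0:ℂ) r) : ‖dslope u 0 z‖ ≤ (2*B+1)/r := by
  have hr : 0 < r := nonempty_ball.1 ⟨z, hz⟩
  have hc : (0:ℂ) ∈ ball (0:ℂ) r := mem_ball_self hr
  have hmaps : Set.MapsTo u (ball (0:ℂ) r) (ball (u 0) (2*B+1)) := by
    intro w hw
    have h1 := hB w hw; have h2 := hB 0 hc
    have hB0 : 0 ≤ B := le_trans (norm_nonneg _) h2
    rw [mem_ball, dist_eq_norm]
    calc ‖u w - u 0‖ ≤ ‖u w‖ + ‖u 0‖ := norm_sub_le _ _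
      _ < 2*B+1 := by linarith
  exact Complex.norm_dslope_le_div_of_mapsTo_ball hd (hmaps.mono_right ball_subset_closedBall) hz

/-- iterated dslope at 0 -/
noncomputable def iterDslope (u : ℂ → ℂ) : ℕ → ℂ → ℂ
  | 0 => u
  | (m+1) => dslope (iterDslope u m) 0

/-- bound sequence -/
noncomputable def Bnd (C r : ℝ) : ℕ → ℝ
  | 0 => C
  | (m+1) => (2 * Bnd C r m + 1) / r

lemma Bnd_nonneg {C r : ℝ} (hC : 0 ≤ C) (hr : 0 < r) : ∀ m, 0 ≤ Bnd C r m
  | 0 => hC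
  | (m+1) => by
      have := Bnd_nonneg hC hr m
      have : 0 ≤ 2 * Bnd C r m + 1 := by linarith
      exact div_nonneg this hr.le

lemma Bnd_le {C r : ℝ} (hC : 0 ≤ C) (hr : 0 < r) (hr1 : r ≤ 1) :
    ∀ m, Bnd C r m + 1 ≤ (2/r)^m * (C+1)
  | 0 => by simp [Bnd]
  | (m+1) => by
      have ih := Bnd_le hC hr hr1 m
      have h0 := Bnd_nonneg hC hr m
      show (2 * Bnd C r m + 1) / r + 1 ≤ (2/r)^(m+1) * (C+1)
      rw [pow_succ, mul_comm ((2/r)^m) (2/r), mul_assoc]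
      have step1 : (2 * Bnd C r m + 1) / r + 1 ≤ (2 * (Bnd C r m + 1)) / r := by
        rw [div_add' _ _ _ hr.ne', div_le_div_iff₀ hr hr]
        nlinarith
      refine le_trans step1 ?_
      rw [div_le_iff₀ hr]
      calc 2 * (Bnd C r m + 1) ≤ 2 * ((2/r)^m * (C+1)) := by nlinarith
        _ = (2/r) * ((2/r)^m * (C+1)) * r := by field_simp

/-- the seed lemma: convergence at the center from convergence at small positive reals -/
lemma conv_at_center {r B : ℝ} (hr : 0 < r) (w : ℕ → ℂ → ℂ)
    (hd : ∀ k, DifferentiableOn ℂ (w k) (ball 0 r))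
    (hb : ∀ k, ∀ z ∈ ball (0:ℂ) r, ‖w k z‖ ≤ B)
    (hc : ∀ t : ℝ, 0 < t → t < r → Conv (fun k => w k t)) :
    Conv (fun k => w k 0) := by
  have hB0 : 0 ≤ B := le_trans (norm_nonneg _) (hb 0 0 (mem_ball_self hr))
  apply conv_of_approx
  intro ε hε
  set t : ℝ := min (r/2) (ε * r / (2*B+1)) with htdef
  have ht0 : 0 < t := by
    apply lt_min (by linarith)
    apply div_pos (by positivity) (by linarith)
  have htr : t < r := lt_of_le_of_lt (min_le_left _ _) (by linarith)
  have htball : (t:ℂ) ∈ ball (0:ℂ) r := by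
    rw [mem_ball, dist_zero_right, Complex.norm_real, Real.norm_eq_abs, abs_of_pos ht0]
    exact htr
  refine ⟨fun k => w k t, hc t ht0 htr, fun k => ?_⟩
  rw [dist_eq_norm, ← norm_neg, neg_sub]
  have h1 : ‖w k t - w k 0‖ ≤ ‖(t:ℂ) - 0‖ * ((2*B+1)/r) := by
    have h2 := norm_dslope_bound (hd k) (hb k) htball
    calc ‖w k t - w k 0‖ = ‖((t:ℂ) - 0) • dslope (w k) 0 t‖ := by rw [sub_smul_dslope]
      _ = ‖(t:ℂ) - 0‖ * ‖dslope (w k) 0 t‖ := by rw [norm_smul]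
      _ ≤ ‖(t:ℂ) - 0‖ * ((2*B+1)/r) := mul_le_mul_of_nonneg_left h2 (norm_nonneg _)
  refine le_trans h1 ?_
  have e : ‖(t:ℂ) - 0‖ = t := by
    rw [sub_zero, Complex.norm_real, Real.norm_eq_abs, abs_of_pos ht0]
  rw [e]
  have ht2 : t ≤ ε * r / (2*B+1) := min_le_right _ _
  calc t * ((2*B+1)/r) ≤ (ε * r / (2*B+1)) * ((2*B+1)/r) := by
        apply mul_le_mul_of_nonneg_right ht2
        positivity
    _ = ε := by field_simp

/-- Vitali seed: convergence on the real interval gives convergence on a small ball. -/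
lemma conv_on_small_ball_of_conv_on_reals {r C : ℝ} (hr : 0 < r) (hr1 : r ≤ 1)
    (u : ℕ → ℂ → ℂ)
    (hd : ∀ k, DifferentiableOn ℂ (u k) (ball 0 r))
    (hb : ∀ k, ∀ z ∈ ball (0:ℂ) r, ‖u k z‖ ≤ C)
    (hc : ∀ t : ℝ, (t:ℂ) ∈ ball (0:ℂ) r → Conv (fun k => u k t)) :
    ∀ z ∈ ball (0:ℂ) (r/4), Conv (fun k => u k z) := by
  have hC0 : 0 ≤ C := le_trans (norm_nonneg _) (hb 0 0 (mem_ball_self hr))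
  -- main induction on the iterated dslopes
  have main : ∀ m : ℕ, (∀ k, DifferentiableOn ℂ (iterDslope (u k) m) (ball 0 r)) ∧
      (∀ k, ∀ z ∈ ball (0:ℂ) r, ‖iterDslope (u k) m z‖ ≤ Bnd C r m) ∧
      (∀ t : ℝ, (t:ℂ) ∈ ball (0:ℂ) r → Conv (fun k => iterDslope (u k) m t)) := by
    intro m
    induction m with
    | zero => exact ⟨hd, hb, hc⟩
    | succ m ih =>
      obtain ⟨ihd, ihb, ihc⟩ := ih
      have hd' : ∀ k, DifferentiableOn ℂ (iterDslope (u k) (m+1)) (ball 0 r) := by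
        intro k
        show DifferentiableOn ℂ (dslope (iterDslope (u k) m) 0) (ball 0 r)
        exact (Complex.differentiableOn_dslope (ball_mem_nhds 0 hr)).2 (ihd k)
      have hb' : ∀ k, ∀ z ∈ ball (0:ℂ) r, ‖iterDslope (u k) (m+1) z‖ ≤ Bnd C r (m+1) := by
        intro k z hz
        exact norm_dslope_bound (ihd k) (ihb k) hz
      refine ⟨hd', hb', ?_⟩
      -- convergence at nonzero reals
      have hne : ∀ t : ℝ, t ≠ 0 → (t:ℂ) ∈ ball (0:ℂ) r →
          Conv (fun k => iterDslope (u k) (m+1) t) := by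
        intro t ht hball
        have htC : (t:ℂ) ≠ 0 := by exact_mod_cast ht
        have e : ∀ k, iterDslope (u k) (m+1) t =
            ((t:ℂ) - 0)⁻¹ * (iterDslope (u k) m t - iterDslope (u k) m 0) := by
          intro k
          show dslope (iterDslope (u k) m) 0 t = _
          rw [dslope_of_ne _ htC, slope_def_module]
          simp [smul_eq_mul]
        simp only [e]
        apply Conv.const_mul
        have h0ball : ((0:ℝ):ℂ) ∈ ball (0:ℂ) r := by
          rw [Complex.ofReal_zero]; exact mem_ball_self hr
        have := (ihc t hball).sub (by simpa using ihc 0 h0ball)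
        exact this
      -- convergence at 0 via conv_at_center
      intro t hball
      rcases eq_or_ne t 0 with rfl | ht
      · push_cast
        apply conv_at_center hr (fun k => iterDslope (u k) (m+1)) hd' hb'
        intro s hs0 hsr
        apply hne s hs0.ne'
        rw [mem_ball, dist_zero_right, Complex.norm_real, Real.norm_eq_abs, abs_of_pos hs0]
        exact hsr
      · exact hne t ht hball
  -- telescoping identity
  have tele : ∀ k (z : ℂ) (N : ℕ), u k z =
      (∑ m ∈ Finset.range N, iterDslope (u k) m 0 * z ^ m) + z ^ N * iterDslope (u k) N z := by
    intro k z N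
    induction N with
    | zero => simp [iterDslope]
    | succ N ih =>
      rw [ih, Finset.sum_range_succ]
      have e : iterDslope (u k) N z = iterDslope (u k) N 0 + z * iterDslope (u k) (N+1) z := by
        have := sub_smul_dslope (iterDslope (u k) N) 0 z
        simp only [sub_zero, smul_eq_mul] at this
        show _ = _ + z * dslope (iterDslope (u k) N) 0 z
        rw [this]; ring
      rw [e]; ring
  intro z hz
  rw [mem_ball, dist_zero_right] at hz
  have hzr : z ∈ ball (0:ℂ) r := by
    rw [mem_ball, dist_zero_right]; linarith
  apply conv_of_approx
  intro ε hε
  -- choose N with (C+1) * (1/2)^N ≤ ε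
  obtain ⟨N, hN⟩ := exists_pow_lt_of_lt_one
    (show (0:ℝ) < ε / (C+1) by positivity) (show (1:ℝ)/2 < 1 by norm_num)
  have hpos : (0:ℝ) < C + 1 := by linarith
  have hNb : (C+1) * (1/2:ℝ)^N ≤ ε := by
    have h' := (lt_div_iff₀ hpos).1 hN
    calc (C+1) * (1/2:ℝ)^N = (1/2:ℝ)^N * (C+1) := by ring
      _ ≤ ε := h'.le
  -- approximate by the partial sums
  obtain ⟨hdN, hbN, hcN⟩ := main N
  have h0ball : ((0:ℝ):ℂ) ∈ ball (0:ℂ) r := by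
    rw [Complex.ofReal_zero]; exact mem_ball_self hr
  refine ⟨fun k => ∑ m ∈ Finset.range N, iterDslope (u k) m 0 * z ^ m, ?_, ?_⟩
  · apply conv_sum
    intro m _
    apply Conv.mul_const
    have := (main m).2.2 0 h0ball
    simpa using this
  · intro k
    rw [dist_eq_norm]
    have e : u k z - ∑ m ∈ Finset.range N, iterDslope (u k) m 0 * z ^ m
        = z ^ N * iterDslope (u k) N z := by
      rw [tele k z N]; ring
    rw [e, norm_mul, norm_pow]
    have hBb : ‖iterDslope (u k) N z‖ ≤ Bnd C r N := hbN k z hzr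
    have hBle : Bnd C r N ≤ (2/r)^N * (C+1) := by
      have := Bnd_le hC0 hr hr1 N
      linarith
    have hz4 : ‖z‖ ≤ r/4 := hz.le
    calc ‖z‖^N * ‖iterDslope (u k) N z‖ ≤ (r/4)^N * ((2/r)^N * (C+1)) := by
          apply mul_le_mul (pow_le_pow_left₀ (norm_nonneg z) hz4 N)
            (le_trans hBb hBle) (norm_nonneg _)
          positivity
      _ = (C+1) * (1/2:ℝ)^N := by
          have e2 : (r/4) ^ N * (2/r) ^ N = (1/2:ℝ)^N := by
            rw [← mul_pow]
            congr 1
            rw [div_mul_div_comm]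
            rw [div_eq_div_iff (by linarith) (by norm_num)]
            ring
          calc (r / 4) ^ N * ((2 / r) ^ N * (C + 1)) = ((r/4)^N * (2/r)^N) * (C+1) := by ring
            _ = (C+1) * (1/2:ℝ)^N := by rw [e2]; ring
      _ ≤ ε := hNb

/-- A seed set in the disc of radius `r`: pointwise convergence of uniformly bounded
holomorphic sequences on it propagates to the whole disc. -/
def GoodSeed (r : ℝ) (T : Set ℂ) : Prop :=
  T ⊆ ball 0 r ∧ ∀ (C : ℝ) (u : ℕ → ℂ → ℂ),
    (∀ k, DifferentiableOn ℂ (u k) (ball 0 r)) →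
    (∀ k, ∀ z ∈ ball (0:ℂ) r, ‖u k z‖ ≤ C) →
    (∀ t ∈ T, Conv (fun k => u k t)) →
    ∀ z ∈ ball (0:ℂ) r, Conv (fun k => u k z)

lemma goodSeed_ball {r δ : ℝ} (hδ : 0 < δ) (hδr : δ ≤ r) : GoodSeed r (ball 0 δ) :=
  ⟨ball_subset_ball hδr, fun C u hd hb hc => conv_on_ball_of_conv_on_small hδ hδr u hd hb hc⟩

lemma goodSeed_reals {r : ℝ} (hr : 0 < r) :
    GoodSeed r ({z : ℂ | z.im = 0} ∩ ball 0 r) := by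
  refine ⟨Set.inter_subset_right, fun C u hd hb hc => ?_⟩
  set r' : ℝ := min r 1 with hr'def
  have hr'0 : 0 < r' := lt_min hr one_pos
  have hr'r : r' ≤ r := min_le_left _ _
  have hsmall : ∀ z ∈ ball (0:ℂ) (r'/4), Conv (fun k => u k z) := by
    apply conv_on_small_ball_of_conv_on_reals hr'0 (min_le_right _ _) u
      (fun k => (hd k).mono (ball_subset_ball hr'r))
      (fun k z hz => hb k z (ball_subset_ball hr'r hz))
    intro t ht
    apply hc
    constructor
    · simp [Complex.ofReal_im]
    · exact ball_subset_ball hr'r ht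
  exact conv_on_ball_of_conv_on_small (by positivity) (by linarith [min_le_left r 1]) u hd hb hsmall

/-- Multi-dimensional propagation over a polydisc, coordinate by coordinate. -/
lemma conv_multi {ι : Type*} [Fintype ι] [DecidableEq ι] {r : ι → ℝ} {T : ι → Set ℂ}
    (hgs : ∀ i, GoodSeed (r i) (T i)) (C : ℝ) (F : ℕ → (ι → ℂ) → ℂ)
    (hd : ∀ k, DifferentiableOn ℂ (F k) {z | ∀ i, z i ∈ ball (0:ℂ) (r i)})
    (hb : ∀ k, ∀ z ∈ {z : ι → ℂ | ∀ i, z i ∈ ball (0:ℂ) (r i)}, ‖F k z‖ ≤ C)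
    (hc : ∀ z ∈ {z : ι → ℂ | ∀ i, z i ∈ ball (0:ℂ) (r i)},
      (∀ i, z i ∈ T i) → Conv (fun k => F k z)) :
    ∀ z ∈ {z : ι → ℂ | ∀ i, z i ∈ ball (0:ℂ) (r i)}, Conv (fun k => F k z) := by
  set P : Set (ι → ℂ) := {z | ∀ i, z i ∈ ball (0:ℂ) (r i)} with hPdef
  suffices H : ∀ s : Finset ι, ∀ z ∈ P, (∀ i ∉ s, z i ∈ T i) → Conv (fun k => F k z) by
    intro z hz
    exact H Finset.univ z hz (fun i hi => absurd (Finset.mem_univ i) hi)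
  intro s
  induction s using Finset.induction with
  | empty =>
    intro z hz h
    exact hc z hz (fun i => h i (Finset.notMem_empty i))
  | insert j s hj ih =>
    intro z hz hout
    have hupd : ∀ ζ ∈ ball (0:ℂ) (r j), Function.update z j ζ ∈ P := by
      intro ζ hζ i
      rcases eq_or_ne i j with rfl | hij
      · rwa [Function.update_self]
      · rw [Function.update_of_ne hij]; exact hz i
    have hU : Differentiable ℂ (fun ζ : ℂ => Function.update z j ζ) := by
      rw [differentiable_pi]
      intro i
      simp only [Function.update_apply]
      rcases eq_or_ne i j with rfl | hij
      · simp only [if_pos rfl]; exact differentiable_id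
      · simp only [if_neg hij]; exact differentiable_const _
    have hdφ : ∀ k, DifferentiableOn ℂ (fun ζ => F k (Function.update z j ζ))
        (ball 0 (r j)) := by
      intro k
      exact (hd k).comp hU.differentiableOn hupd
    have hbφ : ∀ k, ∀ ζ ∈ ball (0:ℂ) (r j), ‖F k (Function.update z j ζ)‖ ≤ C :=
      fun k ζ hζ => hb k _ (hupd ζ hζ)
    have hcφ : ∀ t ∈ T j, Conv (fun k => F k (Function.update z j t)) := by
      intro t ht
      apply ih _ (hupd t ((hgs j).1 ht))
      intro i hi
      rcases eq_or_ne i j with rfl | hij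
      · rwa [Function.update_self]
      · rw [Function.update_of_ne hij]
        exact hout i (by simp [Finset.mem_insert, hij, hi])
    have := (hgs j).2 C _ hdφ hbφ hcφ (z j) (hz j)
    simpa [Function.update_eq_self] using this

lemma lipschitz_along {ι : Type*} [Fintype ι] [DecidableEq ι] {Ω : Set (ι → ℂ)} {B d : ℝ}
    (hd : 0 < d) (hB0 : 0 ≤ B) (u : (ι → ℂ) → ℂ) (hdiff : DifferentiableOn ℂ u Ω)
    (hB : ∀ z ∈ Ω, ‖u z‖ ≤ B)
    (p q : ι → ℂ)
    (hin : ∀ (z : ι → ℂ), (∀ i, z i = p i ∨ z i = q i) → ∀ j (ζ : ℂ), ‖ζ - q j‖ < d →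
      Function.update z j ζ ∈ Ω)
    (hclose : ∀ i, ‖p i - q i‖ < d) :
    ‖u p - u q‖ ≤ (∑ i, ‖p i - q i‖) * ((2*B+1)/d) := by
  classical
  set h : Finset ι → (ι → ℂ) := fun s i => if i ∈ s then p i else q i with hhdef
  have hcoords : ∀ s i, h s i = p i ∨ h s i = q i := by
    intro s i; by_cases hi : i ∈ s <;> simp [hhdef, hi]
  have key : ∀ s : Finset ι, ‖u (h s) - u q‖ ≤ (∑ i ∈ s, ‖p i - q i‖) * ((2*B+1)/d) := by
    intro s
    induction s using Finset.induction with
    | empty =>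
      have e : h ∅ = q := by funext i; simp [hhdef]
      rw [e]
      simp only [sub_self, norm_zero, Finset.sum_empty, zero_mul]
      exact le_refl 0
    | insert j s hj ih =>
      -- one variable move in coordinate j
      set φ : ℂ → ℂ := fun ζ => u (Function.update (h s) j ζ) with hφdef
      have hmem : ∀ ζ ∈ ball (q j) d, Function.update (h s) j ζ ∈ Ω := by
        intro ζ hζ
        apply hin (h s) (hcoords s) j ζ
        rw [mem_ball, dist_eq_norm] at hζ
        exact hζ
      have hUd : Differentiable ℂ (fun ζ : ℂ => Function.update (h s) j ζ) := by
        rw [differentiable_pi]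
        intro i
        simp only [Function.update_apply]
        rcases eq_or_ne i j with rfl | hij
        · simp only [if_pos rfl]; exact differentiable_id
        · simp only [if_neg hij]; exact differentiable_const _
      have hdφ : DifferentiableOn ℂ φ (ball (q j) d) :=
        hdiff.comp hUd.differentiableOn hmem
      have hbφ : ∀ ζ ∈ ball (q j) d, ‖φ ζ‖ ≤ B := fun ζ hζ => hB _ (hmem ζ hζ)
      have hpj : p j ∈ ball (q j) d := by
        rw [mem_ball, dist_eq_norm]; exact hclose j
      have step := norm_sub_le_schwarz hdφ hbφ hpj
      have e1 : h (insert j s) = Function.update (h s) j (p j) := by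
        funext i
        rcases eq_or_ne i j with rfl | hij
        · simp [hhdef, Function.update_self]
        · simp [hhdef, Function.update_of_ne hij, Finset.mem_insert, hij]
      have e2 : h s = Function.update (h s) j (q j) := by
        funext i
        rcases eq_or_ne i j with rfl | hij
        · simp [hhdef, hj, Function.update_self]
        · simp [Function.update_of_ne hij]
      calc ‖u (h (insert j s)) - u q‖
          ≤ ‖u (h (insert j s)) - u (h s)‖ + ‖u (h s) - u q‖ := by
            have := norm_sub_le_norm_sub_add_norm_sub (u (h (insert j s))) (u (h s)) (u q)
            exact this
        _ ≤ ‖p j - q j‖ * ((2*B+1)/d) + (∑ i ∈ s, ‖p i - q i‖) * ((2*B+1)/d) := by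
            apply add_le_add _ ih
            have : u (h (insert j s)) - u (h s) = φ (p j) - φ (q j) := by
              rw [hφdef]
              simp only []
              rw [← e1, ← e2]
            rw [this]
            exact step
        _ = (∑ i ∈ insert j s, ‖p i - q i‖) * ((2*B+1)/d) := by
            rw [Finset.sum_insert hj, add_mul]
  have huniv : h Finset.univ = p := by funext i; simp [hhdef]
  have := key Finset.univ
  rw [huniv] at this
  exact this

lemma interleave_tendsto {a : ℕ → ℂ} {b : ℂ}
    (h : Tendsto a atTop (𝓝 b)) :
    Tendsto (fun k => if k % 2 = 0 then a (k/2) else b) atTop (𝓝 b) := by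
  rw [Metric.tendsto_atTop] at h ⊢
  intro ε hε
  obtain ⟨N, hN⟩ := h ε hε
  refine ⟨2*N, fun k hk => ?_⟩
  by_cases hpar : k % 2 = 0
  · rw [if_pos hpar]; exact hN (k/2) (by omega)
  · rw [if_neg hpar]; simpa using hε

lemma interleave_conv {a : ℕ → ℂ} {b : ℂ}
    (h : Conv (fun k => if k % 2 = 0 then a (k/2) else b)) :
    Tendsto a atTop (𝓝 b) := by
  obtain ⟨L, hL⟩ := h
  have godd : Tendsto (fun m : ℕ => 2*m+1) atTop atTop :=
    tendsto_atTop_mono (fun m => by simp only [id_eq]; omega) tendsto_id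
  have geven : Tendsto (fun m : ℕ => 2*m) atTop atTop :=
    tendsto_atTop_mono (fun m => by simp only [id_eq]; omega) tendsto_id
  have hodd := hL.comp godd
  have heq : ((fun k => if k % 2 = 0 then a (k/2) else b) ∘ (fun m : ℕ => 2*m+1))
      = fun _ => b := by
    funext m
    simp only [Function.comp]
    rw [if_neg (by omega)]
  rw [heq] at hodd
  have hLb : L = b := tendsto_nhds_unique hodd tendsto_const_nhds
  have heven := hL.comp geven
  have heq2 : ((fun k => if k % 2 = 0 then a (k/2) else b) ∘ (fun m : ℕ => 2*m)) = a := by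
    funext m
    simp only [Function.comp]
    rw [if_pos (by omega)]
    congr 1
    omega
  rw [heq2, hLb] at heven
  exact heven

theorem stmt_14 (n : ℕ) (R : ℝ) (hR : 0 < R) (C : ℝ)
    (f : ℕ → ((Fin n → ℂ) × (Fin n → ℂ)) → ℂ)
    (g : ((Fin n → ℂ) × (Fin n → ℂ)) → ℂ)
    (Δ : Set ((Fin n → ℂ) × (Fin n → ℂ)))
    (hΔ : Δ = {p | (∀ i, ‖p.1 i‖ < R) ∧ ∀ i, ‖p.2 i‖ < R})
    (hf : ∀ k, DifferentiableOn ℂ (f k) Δ)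
    (hbound : ∀ k, ∀ p ∈ Δ, ‖f k p‖ ≤ C)
    (hg : DifferentiableOn ℂ g Δ)
    (hconv : ∀ z : Fin n → ℂ, (z, fun i => (starRingEnd ℂ) (z i)) ∈ Δ →
      Tendsto (fun k => f k (z, fun i => (starRingEnd ℂ) (z i))) atTop
        (nhds (g (z, fun i => (starRingEnd ℂ) (z i))))) :
    ∀ K ⊆ Δ, IsCompact K → TendstoUniformlyOn (fun k => f k) g atTop K := by
  classical
  intro K hK hKc
  have hΔ0 : ((fun _ => 0, fun _ => 0) : (Fin n → ℂ) × (Fin n → ℂ)) ∈ Δ := by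
    rw [hΔ]; exact ⟨fun i => by simpa using hR, fun i => by simpa using hR⟩
  have hC0 : 0 ≤ C := le_trans (norm_nonneg _) (hbound 0 _ hΔ0)
  -- continuous linear maps between (Fin n ⊕ Fin n) → ℂ and the product space
  set Ecl : ((Fin n ⊕ Fin n) → ℂ) →L[ℂ] ((Fin n → ℂ) × (Fin n → ℂ)) :=
    (ContinuousLinearMap.pi fun i : Fin n =>
        (ContinuousLinearMap.proj (Sum.inl i) : ((Fin n ⊕ Fin n) → ℂ) →L[ℂ] ℂ)).prod
    (ContinuousLinearMap.pi fun i : Fin n =>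
        (ContinuousLinearMap.proj (Sum.inr i) : ((Fin n ⊕ Fin n) → ℂ) →L[ℂ] ℂ)) with hEcl
  set Einv : ((Fin n → ℂ) × (Fin n → ℂ)) →L[ℂ] ((Fin n ⊕ Fin n) → ℂ) :=
    ContinuousLinearMap.pi fun j => Sum.elim
      (fun i => (ContinuousLinearMap.proj i).comp
        (ContinuousLinearMap.fst ℂ (Fin n → ℂ) (Fin n → ℂ)))
      (fun i => (ContinuousLinearMap.proj i).comp
        (ContinuousLinearMap.snd ℂ (Fin n → ℂ) (Fin n → ℂ))) j with hEinv
  set J : ((Fin n ⊕ Fin n) → ℂ) →L[ℂ] ((Fin n ⊕ Fin n) → ℂ) :=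
    ContinuousLinearMap.pi fun j => Sum.elim
      (fun i => (ContinuousLinearMap.proj (Sum.inl i) : ((Fin n ⊕ Fin n) → ℂ) →L[ℂ] ℂ)
        + Complex.I • ContinuousLinearMap.proj (Sum.inr i))
      (fun i => (ContinuousLinearMap.proj (Sum.inl i) : ((Fin n ⊕ Fin n) → ℂ) →L[ℂ] ℂ)
        - Complex.I • ContinuousLinearMap.proj (Sum.inr i)) j with hJ
  have hE1 : ∀ z (i : Fin n), (Ecl z).1 i = z (Sum.inl i) := fun z i => rfl
  have hE2 : ∀ z (i : Fin n), (Ecl z).2 i = z (Sum.inr i) := fun z i => rfl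
  have hJl : ∀ ζ (i : Fin n), J ζ (Sum.inl i) = ζ (Sum.inl i) + Complex.I * ζ (Sum.inr i) :=
    fun ζ i => rfl
  have hJr : ∀ ζ (i : Fin n), J ζ (Sum.inr i) = ζ (Sum.inl i) - Complex.I * ζ (Sum.inr i) :=
    fun ζ i => rfl
  have hEEinv : ∀ p, Ecl (Einv p) = p := fun p => rfl
  have hmem : ∀ z : (Fin n ⊕ Fin n) → ℂ, Ecl z ∈ Δ ↔ ∀ j, ‖z j‖ < R := by
    intro z
    rw [hΔ]
    constructor
    · rintro ⟨h1, h2⟩ j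
      cases j with
      | inl i => exact h1 i
      | inr i => exact h2 i
    · intro h
      exact ⟨fun i => h (Sum.inl i), fun i => h (Sum.inr i)⟩
  -- the interleaved sequence
  set q : ℕ → ((Fin n → ℂ) × (Fin n → ℂ)) → ℂ :=
    fun k p => if k % 2 = 0 then f (k/2) p else g p with hq
  have hqd : ∀ k, DifferentiableOn ℂ (q k) Δ := by
    intro k
    by_cases h : k % 2 = 0
    · simp only [hq, h, if_true]; exact hf (k/2)
    · simp only [hq, h, if_false]; exact hg
  -- pointwise convergence everywhere on Δ
  have key : ∀ p ∈ Δ, Tendsto (fun k => f k p) atTop (𝓝 (g p)) := by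
    intro p hp
    set w0 : (Fin n ⊕ Fin n) → ℂ := Einv p with hw0
    have hpw : ∀ j, ‖w0 j‖ < R := by
      have : Ecl w0 ∈ Δ := by rw [hw0, hEEinv]; exact hp
      exact (hmem w0).1 this
    have hw0R : ‖w0‖ < R := by
      rw [pi_norm_lt_iff hR]; exact hpw
    set ρ : ℝ := (‖w0‖ + R)/2 with hρ
    have hρ0 : 0 < ρ := by have := norm_nonneg w0; rw [hρ]; linarith
    have hρR : ρ < R := by rw [hρ]; linarith
    have hcoord : ∀ j, ‖w0 j‖ < ρ := by
      intro j
      calc ‖w0 j‖ ≤ ‖w0‖ := norm_le_pi_norm w0 j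
        _ < ρ := by rw [hρ]; linarith
    -- bound for g on the compact image polydisc
    have hcpt : IsCompact (Ecl '' (closedBall (0:(Fin n ⊕ Fin n) → ℂ) ρ)) :=
      (isCompact_closedBall _ _).image Ecl.continuous
    have hcsub : Ecl '' (closedBall (0:(Fin n ⊕ Fin n) → ℂ) ρ) ⊆ Δ := by
      rintro _ ⟨z, hz, rfl⟩
      rw [hmem]
      intro j
      rw [mem_closedBall, dist_zero_right] at hz
      calc ‖z j‖ ≤ ‖z‖ := norm_le_pi_norm z j
        _ ≤ ρ := hz
        _ < R := hρR
    obtain ⟨Cg, hCg⟩ := hcpt.exists_bound_of_continuousOn (hg.continuousOn.mono hcsub)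
    set B1 : ℝ := max C Cg with hB1
    have hqb : ∀ k (z : (Fin n ⊕ Fin n) → ℂ), z ∈ closedBall (0:(Fin n ⊕ Fin n) → ℂ) ρ →
        ‖q k (Ecl z)‖ ≤ B1 := by
      intro k z hz
      by_cases h : k % 2 = 0
      · simp only [hq, h, if_true]
        exact le_trans (hbound (k/2) _ (hcsub ⟨z, hz, rfl⟩)) (le_max_left _ _)
      · simp only [hq, h, if_false]
        exact le_trans (hCg _ ⟨z, hz, rfl⟩) (le_max_right _ _)
    have hballsub : ∀ {s : ℝ}, s ≤ ρ → ∀ {z : (Fin n ⊕ Fin n) → ℂ},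
        (∀ j, z j ∈ ball (0:ℂ) s) → z ∈ closedBall (0:(Fin n ⊕ Fin n) → ℂ) ρ := by
      intro s hs z hz
      rw [mem_closedBall, dist_zero_right]
      apply pi_norm_le_iff_of_nonneg hρ0.le |>.2
      intro j
      have := hz j
      rw [mem_ball, dist_zero_right] at this
      linarith
    have hJmem : ∀ ζ : (Fin n ⊕ Fin n) → ℂ, (∀ j', ‖ζ j'‖ < ρ/2) → ∀ j, ‖J ζ j‖ < ρ := by
      intro ζ hn j
      cases j with
      | inl i =>
        rw [hJl]
        calc ‖ζ (Sum.inl i) + Complex.I * ζ (Sum.inr i)‖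
            ≤ ‖ζ (Sum.inl i)‖ + ‖Complex.I * ζ (Sum.inr i)‖ := norm_add_le _ _
          _ = ‖ζ (Sum.inl i)‖ + ‖ζ (Sum.inr i)‖ := by
              rw [norm_mul, Complex.norm_I, one_mul]
          _ < ρ/2 + ρ/2 := add_lt_add (hn _) (hn _)
          _ = ρ := by ring
      | inr i =>
        rw [hJr]
        calc ‖ζ (Sum.inl i) - Complex.I * ζ (Sum.inr i)‖
            ≤ ‖ζ (Sum.inl i)‖ + ‖Complex.I * ζ (Sum.inr i)‖ := norm_sub_le _ _
          _ = ‖ζ (Sum.inl i)‖ + ‖ζ (Sum.inr i)‖ := by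
              rw [norm_mul, Complex.norm_I, one_mul]
          _ < ρ/2 + ρ/2 := add_lt_add (hn _) (hn _)
          _ = ρ := by ring
    -- Stage 1: convergence on the rotated polydisc of radius ρ/2
    have stage1 : ∀ ζ ∈ {z : (Fin n ⊕ Fin n) → ℂ | ∀ j, z j ∈ ball (0:ℂ) (ρ/2)},
        Conv (fun k => q k (Ecl (J ζ))) := by
      apply conv_multi (r := fun _ => ρ/2)
        (T := fun _ => {z : ℂ | z.im = 0} ∩ ball 0 (ρ/2))
        (fun _ => goodSeed_reals (by positivity)) B1
      · -- differentiability
        intro k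
        have hmaps : Set.MapsTo (fun ζ => Ecl (J ζ))
            {z : (Fin n ⊕ Fin n) → ℂ | ∀ j, z j ∈ ball (0:ℂ) (ρ/2)} Δ := by
          intro ζ hζ
          rw [Set.mem_setOf_eq] at hζ
          rw [hmem]
          intro j
          have hn : ∀ j', ‖ζ j'‖ < ρ/2 := by
            intro j'; have := hζ j'; rwa [mem_ball, dist_zero_right] at this
          exact lt_trans (hJmem ζ hn j) hρR
        exact (hqd k).comp ((Ecl.comp J).differentiable.differentiableOn) hmaps
      · -- boundedness
        intro k ζ hζ
        rw [Set.mem_setOf_eq] at hζ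
        have hn : ∀ j', ‖ζ j'‖ < ρ/2 := by
          intro j'; have := hζ j'; rwa [mem_ball, dist_zero_right] at this
        apply hqb
        apply hballsub (le_refl ρ)
        intro j
        rw [mem_ball, dist_zero_right]
        exact hJmem ζ hn j
      · -- convergence at the real points
        intro ζ hζ hT
        rw [Set.mem_setOf_eq] at hζ
        set z : Fin n → ℂ := fun i => ζ (Sum.inl i) + Complex.I * ζ (Sum.inr i) with hz
        have him : ∀ j, (ζ j).im = 0 := fun j => (hT j).1
        have hpoint : Ecl (J ζ) = (z, fun i => (starRingEnd ℂ) (z i)) := by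
          apply Prod.ext
          · funext i
            show J ζ (Sum.inl i) = z i
            rw [hJl]
          · funext i
            show J ζ (Sum.inr i) = (starRingEnd ℂ) (z i)
            rw [hJr]
            have e : (starRingEnd ℂ) (z i) =
                (starRingEnd ℂ) (ζ (Sum.inl i)) + (starRingEnd ℂ) Complex.I *
                  (starRingEnd ℂ) (ζ (Sum.inr i)) := by
              rw [hz, map_add, map_mul]
            rw [e, Complex.conj_I, Complex.conj_eq_iff_im.2 (him (Sum.inl i)),
              Complex.conj_eq_iff_im.2 (him (Sum.inr i))]
            ring
        have hn : ∀ j', ‖ζ j'‖ < ρ/2 := by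
          intro j'; have := hζ j'; rwa [mem_ball, dist_zero_right] at this
        have hptΔ : Ecl (J ζ) ∈ Δ := (hmem _).2 (fun j => lt_trans (hJmem ζ hn j) hρR)
        have h2 : Tendsto (fun k => f k (Ecl (J ζ))) atTop (𝓝 (g (Ecl (J ζ)))) := by
          rw [hpoint]
          exact hconv z (by rw [← hpoint]; exact hptΔ)
        exact ⟨g (Ecl (J ζ)), interleave_tendsto h2⟩
    -- Stage 2: convergence on the full polydisc of radius ρ
    have stage2 : ∀ ζ ∈ {z : (Fin n ⊕ Fin n) → ℂ | ∀ j, z j ∈ ball (0:ℂ) ρ},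
        Conv (fun k => q k (Ecl ζ)) := by
      apply conv_multi (r := fun _ => ρ) (T := fun _ => ball 0 (ρ/4))
        (fun _ => goodSeed_ball (by positivity) (by linarith)) B1
      · intro k
        have hmaps : Set.MapsTo (fun ζ : (Fin n ⊕ Fin n) → ℂ => Ecl ζ)
            {z : (Fin n ⊕ Fin n) → ℂ | ∀ j, z j ∈ ball (0:ℂ) ρ} Δ := by
          intro ζ hζ
          rw [Set.mem_setOf_eq] at hζ
          rw [hmem]
          intro j
          have := hζ j; rw [mem_ball, dist_zero_right] at this
          exact lt_trans this hρR
        exact (hqd k).comp (Ecl.differentiable.differentiableOn) hmaps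
      · intro k ζ hζ
        rw [Set.mem_setOf_eq] at hζ
        exact hqb k ζ (hballsub (le_refl ρ) hζ)
      · intro ζ hζ hT
        set ξ : (Fin n ⊕ Fin n) → ℂ := fun j => Sum.elim
          (fun i => (ζ (Sum.inl i) + ζ (Sum.inr i))/2)
          (fun i => (ζ (Sum.inl i) - ζ (Sum.inr i))/(2*Complex.I)) j with hξ
        have hJξ : J ξ = ζ := by
          funext j
          cases j with
          | inl i =>
            rw [hJl]
            show (ζ (Sum.inl i) + ζ (Sum.inr i))/2
              + Complex.I * ((ζ (Sum.inl i) - ζ (Sum.inr i))/(2*Complex.I)) = ζ (Sum.inl i)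
            field_simp [Complex.I_ne_zero]
            ring
          | inr i =>
            rw [hJr]
            show (ζ (Sum.inl i) + ζ (Sum.inr i))/2
              - Complex.I * ((ζ (Sum.inl i) - ζ (Sum.inr i))/(2*Complex.I)) = ζ (Sum.inr i)
            field_simp [Complex.I_ne_zero]
            ring
        have hTn : ∀ j', ‖ζ j'‖ < ρ/4 := by
          intro j'; have := hT j'; rwa [mem_ball, dist_zero_right] at this
        have hξmem : ξ ∈ {z : (Fin n ⊕ Fin n) → ℂ | ∀ j, z j ∈ ball (0:ℂ) (ρ/2)} := by
          intro j
          rw [mem_ball, dist_zero_right]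
          cases j with
          | inl i =>
            show ‖(ζ (Sum.inl i) + ζ (Sum.inr i))/2‖ < ρ/2
            rw [norm_div]
            have e2 : ‖(2:ℂ)‖ = 2 := by norm_num
            rw [e2]
            have := norm_add_le (ζ (Sum.inl i)) (ζ (Sum.inr i))
            have h1 := hTn (Sum.inl i); have h2 := hTn (Sum.inr i)
            rw [div_lt_iff₀ (by norm_num : (0:ℝ) < 2)]
            calc ‖ζ (Sum.inl i) + ζ (Sum.inr i)‖ ≤ ‖ζ (Sum.inl i)‖ + ‖ζ (Sum.inr i)‖ := this
              _ < ρ/2 * 2 := by linarith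
          | inr i =>
            show ‖(ζ (Sum.inl i) - ζ (Sum.inr i))/(2*Complex.I)‖ < ρ/2
            rw [norm_div, norm_mul, Complex.norm_I, mul_one]
            have e2 : ‖(2:ℂ)‖ = 2 := by norm_num
            rw [e2]
            have := norm_sub_le (ζ (Sum.inl i)) (ζ (Sum.inr i))
            have h1 := hTn (Sum.inl i); have h2 := hTn (Sum.inr i)
            rw [div_lt_iff₀ (by norm_num : (0:ℝ) < 2)]
            calc ‖ζ (Sum.inl i) - ζ (Sum.inr i)‖ ≤ ‖ζ (Sum.inl i)‖ + ‖ζ (Sum.inr i)‖ := this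
              _ < ρ/2 * 2 := by linarith
        have := stage1 ξ hξmem
        rwa [hJξ] at this
    -- conclude pointwise convergence at p
    have hw0mem : w0 ∈ {z : (Fin n ⊕ Fin n) → ℂ | ∀ j, z j ∈ ball (0:ℂ) ρ} := by
      intro j; rw [mem_ball, dist_zero_right]; exact hcoord j
    have hfin := stage2 w0 hw0mem
    have hEw0 : Ecl w0 = p := by rw [hw0]; exact hEEinv p
    rw [hEw0] at hfin
    exact interleave_conv (a := fun m => f m p) (b := g p) hfin
  -- ======= uniform convergence on K =======
  set KW : Set ((Fin n ⊕ Fin n) → ℂ) := Einv '' K with hKW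
  have hKWc : IsCompact KW := hKc.image Einv.continuous
  set ΔW : Set ((Fin n ⊕ Fin n) → ℂ) := {z | ∀ j, ‖z j‖ < R} with hΔW
  have hKWsub : KW ⊆ ΔW := by
    rintro z ⟨p, hp, rfl⟩
    have : Ecl (Einv p) ∈ Δ := by rw [hEEinv]; exact hK hp
    exact (hmem (Einv p)).1 this
  have hΔWopen : IsOpen ΔW := by
    have e : ΔW = ⋂ j, {z : (Fin n ⊕ Fin n) → ℂ | ‖z j‖ < R} := by
      ext z; simp [hΔW, Set.mem_iInter]
    rw [e]
    exact isOpen_iInter_of_finite fun j =>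
      isOpen_lt ((continuous_apply j).norm) continuous_const
  obtain ⟨δ, hδ0, hδsub⟩ := hKWc.exists_thickening_subset_open hΔWopen hKWsub
  have hcthick : IsCompact (cthickening (δ/2) KW) := hKWc.cthickening
  have hcsub2 : cthickening (δ/2) KW ⊆ ΔW :=
    subset_trans (cthickening_subset_thickening' hδ0 (by linarith) KW) hδsub
  set G : ((Fin n ⊕ Fin n) → ℂ) → ℂ := fun z => g (Ecl z) with hG
  have hEmaps : ∀ z ∈ ΔW, Ecl z ∈ Δ := fun z hz => (hmem z).2 hz
  have hGd : DifferentiableOn ℂ G ΔW :=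
    hg.comp (Ecl.differentiable.differentiableOn) hEmaps
  obtain ⟨Cg2, hCg2⟩ := hcthick.exists_bound_of_continuousOn (hGd.continuousOn.mono hcsub2)
  set B2 : ℝ := max C (max Cg2 0) with hB2
  have hB20 : 0 ≤ B2 := le_max_of_le_right (le_max_right _ _)
  set Ω : Set ((Fin n ⊕ Fin n) → ℂ) := thickening (δ/2) KW with hΩ
  have hΩsub : Ω ⊆ ΔW := subset_trans (thickening_mono (by linarith) KW) hδsub
  have hΩcsub : Ω ⊆ cthickening (δ/2) KW := thickening_subset_cthickening _ _
  set d : ℝ := δ/4 with hd4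
  have hd0 : 0 < d := by rw [hd4]; linarith
  have lip : ∀ u : ((Fin n ⊕ Fin n) → ℂ) → ℂ, DifferentiableOn ℂ u ΔW →
      (∀ z ∈ Ω, ‖u z‖ ≤ B2) →
      ∀ x y, y ∈ KW → (∀ i, ‖x i - y i‖ < d) →
      ‖u x - u y‖ ≤ (∑ i, ‖x i - y i‖) * ((2*B2+1)/d) := by
    intro u hud hub x y hy hclose
    apply lipschitz_along (Ω := Ω) hd0 hB20 u (hud.mono hΩsub) hub
    · intro z hzc j ζ hζ
      rw [hΩ, mem_thickening_iff]
      refine ⟨y, hy, ?_⟩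
      rw [dist_pi_lt_iff (by linarith)]
      intro i
      rcases eq_or_ne i j with rfl | hij
      · rw [Function.update_self, dist_eq_norm]
        calc ‖ζ - y i‖ < d := hζ
          _ < δ/2 := by rw [hd4]; linarith
      · rw [Function.update_of_ne hij, dist_eq_norm]
        rcases hzc i with h | h
        · rw [h]
          calc ‖x i - y i‖ < d := hclose i
            _ < δ/2 := by rw [hd4]; linarith
        · rw [h]
          simp only [sub_self, norm_zero]
          linarith
    · exact hclose
  -- the two families are bounded on Ω
  have hFb : ∀ k, ∀ z ∈ Ω, ‖f k (Ecl z)‖ ≤ B2 := by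
    intro k z hz
    exact le_trans (hbound k _ (hEmaps z (hΩsub hz))) (le_max_left _ _)
  have hGb : ∀ z ∈ Ω, ‖G z‖ ≤ B2 := by
    intro z hz
    exact le_trans (hCg2 z (hΩcsub hz)) (le_max_of_le_right (le_max_left _ _))
  have hFd : ∀ k, DifferentiableOn ℂ (fun z => f k (Ecl z)) ΔW := by
    intro k
    exact (hf k).comp (Ecl.differentiable.differentiableOn) hEmaps
  -- uniform convergence on KW
  have hUW : TendstoUniformlyOn (fun k z => f k (Ecl z)) G atTop KW := by
    rw [Metric.tendstoUniformlyOn_iff]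
    intro ε hε
    set L : ℝ := (2*B2+1)/d with hL
    have hL0 : 0 < L := by rw [hL]; positivity
    set card : ℝ := (Fintype.card (Fin n ⊕ Fin n) : ℝ) with hcard
    have hcard0 : 0 ≤ card := by rw [hcard]; positivity
    set η : ℝ := min (d/2) (ε/4 / (L * (card + 1))) with hη
    have hη0 : 0 < η := by
      apply lt_min (by linarith)
      apply div_pos (by linarith)
      apply mul_pos hL0 (by linarith)
    have hηd : η < d := lt_of_le_of_lt (min_le_left _ _) (by linarith)
    have hηsum : card * η * L ≤ ε/4 := by
      have h1 : η ≤ ε/4 / (L * (card + 1)) := min_le_right _ _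
      have h2 : card * η * L ≤ card * (ε/4 / (L * (card + 1))) * L := by
        apply mul_le_mul_of_nonneg_right _ hL0.le
        exact mul_le_mul_of_nonneg_left h1 hcard0
      refine le_trans h2 ?_
      have e : card * (ε/4 / (L * (card + 1))) * L = (ε/4) * (card / (card + 1)) := by
        field_simp
      rw [e]
      have h3 : card / (card + 1) ≤ 1 := by
        rw [div_le_one (by linarith)]
        linarith
      calc (ε/4) * (card / (card+1)) ≤ (ε/4) * 1 :=
            mul_le_mul_of_nonneg_left h3 (by linarith)
        _ = ε/4 := mul_one _
    -- Lipschitz control within η-balls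
    have hctrl : ∀ u : ((Fin n ⊕ Fin n) → ℂ) → ℂ, DifferentiableOn ℂ u ΔW →
        (∀ z ∈ Ω, ‖u z‖ ≤ B2) → ∀ x y, y ∈ KW → x ∈ ball y η → ‖u x - u y‖ ≤ ε/4 := by
      intro u hud hub x y hy hxy
      rw [mem_ball] at hxy
      have hcl : ∀ i, ‖x i - y i‖ < d := by
        intro i
        calc ‖x i - y i‖ = dist (x i) (y i) := (dist_eq_norm _ _).symm
          _ ≤ dist x y := dist_le_pi_dist x y i
          _ < η := hxy
          _ < d := hηd
      refine le_trans (lip u hud hub x y hy hcl) ?_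
      have hsumle : (∑ i, ‖x i - y i‖) ≤ card * η := by
        rw [hcard]
        calc (∑ i, ‖x i - y i‖) ≤ ∑ _i : (Fin n ⊕ Fin n), η := by
              apply Finset.sum_le_sum
              intro i _
              have : dist (x i) (y i) ≤ dist x y := dist_le_pi_dist x y i
              rw [dist_eq_norm] at this
              linarith [hxy]
          _ = (Fintype.card (Fin n ⊕ Fin n) : ℝ) * η := by
              rw [Finset.sum_const, Finset.card_univ, nsmul_eq_mul]
      calc (∑ i, ‖x i - y i‖) * L ≤ (card * η) * L :=
            mul_le_mul_of_nonneg_right hsumle hL0.le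
        _ ≤ ε/4 := hηsum
    obtain ⟨t, htsub, htfin, htcover⟩ := hKWc.finite_cover_balls hη0
    have hev : ∀ᶠ k in atTop, ∀ y ∈ t, dist (G y) (f k (Ecl y)) < ε/4 := by
      rw [eventually_all_finite htfin]
      intro y hy
      have hyK : y ∈ KW := htsub hy
      have hyΔ : Ecl y ∈ Δ := hEmaps y (hKWsub hyK)
      have := key (Ecl y) hyΔ
      have h2 := Metric.tendsto_atTop.1 this (ε/4) (by linarith)
      obtain ⟨N, hN⟩ := h2
      rw [eventually_atTop]
      exact ⟨N, fun k hk => by rw [dist_comm]; exact hN k hk⟩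
    filter_upwards [hev] with k hk
    intro x hx
    obtain ⟨y, hy, hxy⟩ := Set.mem_iUnion₂.1 (htcover hx)
    have hyK : y ∈ KW := htsub hy
    have h1 : ‖G x - G y‖ ≤ ε/4 := hctrl G hGd hGb x y hyK hxy
    have h2 : dist (G y) (f k (Ecl y)) < ε/4 := hk y hy
    have h3 : ‖(fun z => f k (Ecl z)) x - (fun z => f k (Ecl z)) y‖ ≤ ε/4 :=
      hctrl _ (hFd k) (hFb k) x y hyK hxy
    calc dist (G x) (f k (Ecl x))
        ≤ dist (G x) (G y) + dist (G y) (f k (Ecl y)) + dist (f k (Ecl y)) (f k (Ecl x)) :=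
          dist_triangle4 _ _ _ _
      _ ≤ ε/4 + ε/4 + ε/4 := by
          apply add_le_add (add_le_add _ h2.le) _
          · rw [dist_eq_norm]; exact h1
          · rw [dist_eq_norm, ← norm_neg, neg_sub]; exact h3
      _ < ε := by linarith
  -- transfer back to K
  have hcomp := hUW.comp Einv
  have e1 : (fun k => (fun z => f k (Ecl z)) ∘ Einv) = fun k => f k := by
    funext k p
    show f k (Ecl (Einv p)) = f k p
    rw [hEEinv]
  have e2 : G ∘ Einv = g := by
    funext p
    show g (Ecl (Einv p)) = g p
    rw [hEEinv]
  rw [e1, e2] at hcomp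
  apply hcomp.mono
  intro p hp
  exact ⟨p, hp, rfl⟩
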